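/- Let z₁ > 0 > z₂, 0 < a, let h : [0,a] → ℝ be continuous and strictly positive, and set H(x) := ∫₀ˣ ds/h(s). Let φ₀ˡ, φ₀^{a,l} ∈ ℝ and c₁₀ˡ, c₁₀^{a,l} > 0 with c₁₀ˡ ≠ c₁₀^{a,l}. Define for x ∈ [0,a]: c₁₀(x) := (1 − H(x)/H(a))·c₁₀ˡ + (H(x)/H(a))·c₁₀^{a,l}, φ₀(x) := φ₀ˡ + ((φ₀^{a,l} − φ₀ˡ)/(ln c₁₀^{a,l} − ln c₁₀ˡ))·ln(1 − H(x)/H(a) + (H(x)/H(a))·c₁₀^{a,l}/c₁₀ˡ), J₁₀ := ((c₁₀ˡ − c₁₀^{a,l})/H(a))·(1 + z₁(φ₀ˡ − φ₀^{a,l})/(ln c₁₀ˡ − ln c₁₀^{a,l})), J₂₀ := −(z₁(c₁₀ˡ − c₁₀^{a,l})/(z₂H(a)))·(1 + z₂(φ₀ˡ − φ₀^{a,l})/(ln c₁₀ˡ − ln c₁₀^{a,l})), I₀ := z₁J₁₀ + z₂J₂₀, T₀ := J₁₀ + J₂₀. Then c₁₀(x) > 0 on [0,a], φ₀(0) = φ₀ˡ,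 c₁₀(0) = c₁₀ˡ, φ₀(a) = φ₀^{a,l}, c₁₀(a) = c₁₀^{a,l}, and for all x ∈ (0,a): φ₀'(x) = −I₀/(z₁(z₁−z₂)h(x)c₁₀(x)) and c₁₀'(x) = z₂T₀/((z₁−z₂)h(x)). -/

import Mathlib

open intervalIntegral in
/-- Lemma 2.2: the zeroth-order regular layer on `[0,a]` (no permanent charge)
solves the limiting slow system with the prescribed boundary values. -/
theorem zeroth_order_regular_layer_on_0a
    (z₁ z₂ a : ℝ) (hz₁ : 0 < z₁) (hz₂ : z₂ < 0) (ha : 0 < a)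
    (h : ℝ → ℝ) (hcont : ContinuousOn h (Set.Icc 0 a))
    (hpos : ∀ x ∈ Set.Icc 0 a, 0 < h x)
    (H : ℝ → ℝ) (hH : ∀ x, H x = ∫ s in (0 : ℝ)..x, 1 / h s)
    (φ₀l φ₀al c₁₀l c₁₀al : ℝ) (hc₁₀l : 0 < c₁₀l) (hc₁₀al : 0 < c₁₀al)
    (hne : c₁₀l ≠ c₁₀al)
    (c₁₀ φ₀ : ℝ → ℝ) (J₁₀ J₂₀ I₀ T₀ : ℝ)
    (hc₁₀ : ∀ x, c₁₀ x = (1 - H x / H a) * c₁₀l + (H x / H a) * c₁₀al)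
    (hφ₀ : ∀ x, φ₀ x = φ₀l + ((φ₀al - φ₀l) / (Real.log c₁₀al - Real.log c₁₀l)) *
      Real.log (1 - H x / H a + (H x / H a) * (c₁₀al / c₁₀l)))
    (hJ₁₀ : J₁₀ = ((c₁₀l - c₁₀al) / H a) *
      (1 + z₁ * (φ₀l - φ₀al) / (Real.log c₁₀l - Real.log c₁₀al)))
    (hJ₂₀ : J₂₀ = -(z₁ * (c₁₀l - c₁₀al) / (z₂ * H a)) *
      (1 + z₂ * (φ₀l - φ₀al) / (Real.log c₁₀l - Real.log c₁₀al)))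
    (hI₀ : I₀ = z₁ * J₁₀ + z₂ * J₂₀) (hT₀ : T₀ = J₁₀ + J₂₀) :
    (∀ x ∈ Set.Icc 0 a, 0 < c₁₀ x) ∧
    φ₀ 0 = φ₀l ∧ c₁₀ 0 = c₁₀l ∧ φ₀ a = φ₀al ∧ c₁₀ a = c₁₀al ∧
    (∀ x ∈ Set.Ioo 0 a,
      HasDerivAt φ₀ (-I₀ / (z₁ * (z₁ - z₂) * h x * c₁₀ x)) x ∧
      HasDerivAt c₁₀ (z₂ * T₀ / ((z₁ - z₂) * h x)) x) := by
  have ha0 : (0:ℝ) ∈ Set.Icc 0 a := ⟨le_refl 0, ha.le⟩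
  have haa : a ∈ Set.Icc 0 a := ⟨ha.le, le_refl a⟩
  have hcont' : ContinuousOn (fun s => 1 / h s) (Set.Icc 0 a) :=
    continuousOn_const.div hcont (fun x hx => (hpos x hx).ne')
  have hii : ∀ x ∈ Set.Icc 0 a, ∀ y ∈ Set.Icc 0 a,
      IntervalIntegrable (fun s => 1 / h s) MeasureTheory.volume x y := by
    intro x hx y hy
    apply (hcont'.mono ?_).intervalIntegrable
    rw [← Set.uIcc_of_le ha.le]
    exact Set.uIcc_subset_uIcc (by rwa [Set.uIcc_of_le ha.le])
      (by rwa [Set.uIcc_of_le ha.le])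
  have hH0 : H 0 = 0 := by rw [hH]; simp
  have hbound : ∀ x ∈ Set.Icc 0 a, 0 ≤ H x ∧ H x ≤ H a := by
    intro x hx
    constructor
    · rw [hH]
      refine intervalIntegral.integral_nonneg hx.1 (fun u hu => ?_)
      have hu' : 0 < h u := hpos u ⟨hu.1, le_trans hu.2 hx.2⟩
      positivity
    · have hadd : H x + ∫ s in x..a, 1 / h s = H a := by
        rw [hH x, hH a]
        exact intervalIntegral.integral_add_adjacent_intervals (hii 0 ha0 x hx) (hii x hx a haa)
      have hnn : 0 ≤ ∫ s in x..a, 1 / h s := by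
        refine intervalIntegral.integral_nonneg hx.2 (fun u hu => ?_)
        have hu' : 0 < h u := hpos u ⟨le_trans hx.1 hu.1, hu.2⟩
        positivity
      linarith
  have hHa : 0 < H a := by
    rw [hH]
    exact intervalIntegral.intervalIntegral_pos_of_pos_on (hii 0 ha0 a haa)
      (fun u hu => by
        have hu' : 0 < h u := hpos u ⟨hu.1.le, hu.2.le⟩
        positivity) ha
  have hHane : H a ≠ 0 := hHa.ne'
  have hLog : Real.log c₁₀l ≠ Real.log c₁₀al := fun hEq =>
    hne (Real.log_injOn_pos (Set.mem_Ioi.2 hc₁₀l) (Set.mem_Ioi.2 hc₁₀al) hEq)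
  have hL : Real.log c₁₀l - Real.log c₁₀al ≠ 0 := sub_ne_zero.2 hLog
  have hL' : Real.log c₁₀al - Real.log c₁₀l ≠ 0 := sub_ne_zero.2 hLog.symm
  have hz₂ne : z₂ ≠ 0 := hz₂.ne
  have hz₁ne : z₁ ≠ 0 := hz₁.ne'
  have hzz : z₁ - z₂ ≠ 0 := sub_ne_zero.2 (by linarith)
  -- positivity of c₁₀
  have hposc : ∀ x ∈ Set.Icc 0 a, 0 < c₁₀ x := by
    intro x hx
    obtain ⟨h0, h1⟩ := hbound x hx
    have ht0 : 0 ≤ H x / H a := div_nonneg h0 hHa.le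
    have ht1 : H x / H a ≤ 1 := (div_le_one hHa).2 h1
    rw [hc₁₀ x]
    rcases le_total c₁₀l c₁₀al with hle | hle
    · nlinarith
    · nlinarith
  refine ⟨hposc, ?_, ?_, ?_, ?_, ?_⟩
  · rw [hφ₀ 0, hH0]; simp
  · rw [hc₁₀ 0, hH0]; simp
  · rw [hφ₀ a, div_self hHane]
    rw [show (1 : ℝ) - 1 + 1 * (c₁₀al / c₁₀l) = c₁₀al / c₁₀l by ring]
    rw [Real.log_div hc₁₀al.ne' hc₁₀l.ne', div_mul_cancel₀ _ hL']
    ring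
  · rw [hc₁₀ a, div_self hHane]; ring
  · intro x hx
    have hxIcc : x ∈ Set.Icc 0 a := ⟨hx.1.le, hx.2.le⟩
    have hhx : 0 < h x := hpos x hxIcc
    have hHd : HasDerivAt H (1 / h x) x := by
      have hmem : Set.Icc 0 a ∈ nhds x := Icc_mem_nhds hx.1 hx.2
      have hca : ContinuousAt (fun s => 1 / h s) x := hcont'.continuousAt hmem
      have hms : StronglyMeasurableAtFilter (fun s => 1 / h s) (nhds x) MeasureTheory.volume :=
        (hcont'.mono Set.Ioo_subset_Icc_self).stronglyMeasurableAtFilter isOpen_Ioo x hx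
      have hD := intervalIntegral.integral_hasDerivAt_right (hii 0 ha0 x hxIcc) hms hca
      have hfun : H = fun y => ∫ s in (0:ℝ)..y, 1 / h s := funext hH
      rw [hfun]
      exact hD
    have hcx : 0 < c₁₀ x := hposc x hxIcc
    constructor
    · -- φ₀ derivative
      have hGd : HasDerivAt (fun y => 1 - H y / H a + (H y / H a) * (c₁₀al / c₁₀l))
          ((0 - 1 / h x / H a) + (1 / h x / H a) * (c₁₀al / c₁₀l)) x :=
        (((hasDerivAt_const x (1:ℝ)).sub (hHd.div_const _)).add
          ((hHd.div_const _).mul_const _))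
      have hGval : 1 - H x / H a + (H x / H a) * (c₁₀al / c₁₀l) = c₁₀ x / c₁₀l := by
        rw [hc₁₀ x]; field_simp
      have hGne : 1 - H x / H a + (H x / H a) * (c₁₀al / c₁₀l) ≠ 0 := by
        rw [hGval]; positivity
      have hd : HasDerivAt φ₀
          (((φ₀al - φ₀l) / (Real.log c₁₀al - Real.log c₁₀l)) *
            (((0 - 1 / h x / H a) + (1 / h x / H a) * (c₁₀al / c₁₀l)) /
              (1 - H x / H a + (H x / H a) * (c₁₀al / c₁₀l)))) x := by
        have hfun : φ₀ = fun y => φ₀l + ((φ₀al - φ₀l) / (Real.log c₁₀al - Real.log c₁₀l)) *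
            Real.log (1 - H y / H a + (H y / H a) * (c₁₀al / c₁₀l)) := funext hφ₀
        rw [hfun]
        simpa using ((hGd.log hGne).const_mul
          ((φ₀al - φ₀l) / (Real.log c₁₀al - Real.log c₁₀l))).const_add φ₀l
      have heq : ((φ₀al - φ₀l) / (Real.log c₁₀al - Real.log c₁₀l)) *
            (((0 - 1 / h x / H a) + (1 / h x / H a) * (c₁₀al / c₁₀l)) /
              (1 - H x / H a + (H x / H a) * (c₁₀al / c₁₀l)))
          = -I₀ / (z₁ * (z₁ - z₂) * h x * c₁₀ x) := by
        rw [hGval, hI₀, hJ₁₀, hJ₂₀]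
        have hcne : c₁₀ x ≠ 0 := hcx.ne'
        field_simp
        ring
      rwa [heq] at hd
    · -- c₁₀ derivative
      have hd : HasDerivAt c₁₀
          ((0 - 1 / h x / H a) * c₁₀l + (1 / h x / H a) * c₁₀al) x := by
        have hfun : c₁₀ = fun y => (1 - H y / H a) * c₁₀l + (H y / H a) * c₁₀al :=
          funext hc₁₀
        rw [hfun]
        exact (((hasDerivAt_const x (1:ℝ)).sub (hHd.div_const _)).mul_const _).add
          ((hHd.div_const _).mul_const _)
      have heq : (0 - 1 / h x / H a) * c₁₀l + (1 / h x / H a) * c₁₀al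
          = z₂ * T₀ / ((z₁ - z₂) * h x) := by
        rw [hT₀, hJ₁₀, hJ₂₀]
        field_simp
        ring
      rwa [heq] at hd
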